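/- Let S be an optimal feasible schedule that is normal, and for each shared processor i let X_i = { j ∈ J : μ(j) = i and f_j(S) > 0 }. Then for each i with X_i ≠ ∅ there is no idle time on processor i in the interval (0, max{ f_j(S) : j ∈ X_i }); that is, every point of this interval, except possibly finitely many, lies in some interval of ⋃_{j∈X_i} I_j. -/

import Mathlib

/-- A feasible schedule for a shared multi-processor instance: jobs `J` with
processing times `p`, `m` shared processors.  Each job `j` gets a shared
processor `mu j`, a finite set `iv j` of pairwise disjoint open bounded
subintervals of `(0,∞)` (represented by their endpoint pairs) on which `j`
executes on processor `mu j`, and a private completion time `c j ≥ 0` so that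
`j` executes on its private processor exactly in `(0, c j)`.  The private time
plus the total length of the shared intervals equals `p j`, and intervals of
distinct jobs on a common shared processor are disjoint. -/
structure Schedule (J : Type) [Fintype J] [DecidableEq J] (m : ℕ) (p : J → ℝ) where
  mu : J → Fin m
  iv : J → Finset (ℝ × ℝ)
  c : J → ℝ
  c_nonneg : ∀ j, 0 ≤ c j
  iv_valid : ∀ j, ∀ q ∈ iv j, 0 ≤ q.1 ∧ q.1 ≤ q.2
  iv_disjoint : ∀ j, ∀ q ∈ iv j, ∀ q' ∈ iv j, q ≠ q' → q.2 ≤ q'.1 ∨ q'.2 ≤ q.1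
  total : ∀ j, c j + ∑ q ∈ iv j, (q.2 - q.1) = p j
  shared_disjoint : ∀ j j', j ≠ j' → mu j = mu j' →
    ∀ q ∈ iv j, ∀ q' ∈ iv j', q.2 ≤ q'.1 ∨ q'.2 ≤ q.1

namespace Schedule

variable {J : Type} [Fintype J] [DecidableEq J] {m : ℕ} {p : J → ℝ}

/-- The overlap `t_j` of job `j`: total length of `(0, c j) ∩ ⋃ (iv j)`. -/
noncomputable def overlap (S : Schedule J m p) (j : J) : ℝ :=
  ∑ q ∈ S.iv j, max 0 (min (S.c j) q.2 - q.1)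

/-- Total weighted overlap `Ω(S) = Σ_j w_j t_j`. -/
noncomputable def Omega (S : Schedule J m p) (w : J → ℝ) : ℝ :=
  ∑ j, w j * S.overlap j

/-- Completion time of `j` on its shared processor: the supremum of right
endpoints of its shared intervals, `0` if there are none. -/
noncomputable def ftime (S : Schedule J m p) (j : J) : ℝ :=
  WithBot.unbotD 0 (((S.iv j).image Prod.snd).max)

/-- A schedule is normal if every job completes on the shared processor no
later than on its private processor. -/
def Normal (S : Schedule J m p) : Prop := ∀ j, S.ftime j ≤ S.c j

/-- A schedule is optimal if it maximizes the total weighted overlap. -/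
def Optimal (S : Schedule J m p) (w : J → ℝ) : Prop :=
  ∀ S' : Schedule J m p, S'.Omega w ≤ S.Omega w

end Schedule

namespace Schedule

variable {J : Type} [Fintype J] [DecidableEq J] {m : ℕ} {p : J → ℝ}

lemma snd_le_ftime (S : Schedule J m p) (j : J) {q : ℝ × ℝ} (hq : q ∈ S.iv j) :
    q.2 ≤ S.ftime j := by
  unfold ftime
  have hmem : q.2 ∈ (S.iv j).image Prod.snd := Finset.mem_image_of_mem _ hq
  have hle := Finset.le_max hmem
  rcases hmax : ((S.iv j).image Prod.snd).max with _ | x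
  · exact absurd (Finset.max_eq_bot.1 hmax) (Finset.ne_empty_of_mem hmem)
  · rw [hmax] at hle
    have : q.2 ≤ x := WithBot.coe_le_coe.1 hle
    exact this

lemma overlap_eq_sum (S : Schedule J m p) (j : J) (h : ∀ q ∈ S.iv j, q.2 ≤ S.c j) :
    S.overlap j = ∑ q ∈ S.iv j, (q.2 - q.1) := by
  unfold overlap
  refine Finset.sum_congr rfl fun q hq => ?_
  have hv := S.iv_valid j q hq
  rw [min_eq_right (h q hq), max_eq_right (by linarith [hv.2])]

end Schedule

lemma gap_lemma (s : Finset (ℝ × ℝ)) : ∀ a0 b0 : ℝ,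
    ¬ (Set.Ioo a0 b0 \ ⋃ q ∈ s, Set.Ioo q.1 q.2).Finite →
    ∃ a b : ℝ, a < b ∧ Set.Ioo a b ⊆ Set.Ioo a0 b0 \ ⋃ q ∈ s, Set.Ioo q.1 q.2 := by
  induction s using Finset.induction_on with
  | empty =>
      intro a0 b0 h
      refine ⟨a0, b0, ?_, by simp⟩
      by_contra hab
      exact h (by simp [Set.Ioo_eq_empty hab])
  | @insert q₀ t hq₀ ih =>
      intro a0 b0 h
      set c1 := min b0 q₀.1 with hc1
      set c2 := max a0 q₀.2 with hc2
      have hsplit : Set.Ioo a0 b0 \ ⋃ q ∈ insert q₀ t, Set.Ioo q.1 q.2 ⊆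
          ((Set.Ioo a0 c1 \ ⋃ q ∈ t, Set.Ioo q.1 q.2) ∪
           (Set.Ioo c2 b0 \ ⋃ q ∈ t, Set.Ioo q.1 q.2)) ∪ {c1, c2} := by
        rintro x ⟨hx, hnx⟩
        have hnq₀ : x ∉ Set.Ioo q₀.1 q₀.2 := fun hmem =>
          hnx (Set.mem_biUnion (Finset.mem_insert_self q₀ t) hmem)
        have hnt : x ∉ ⋃ q ∈ t, Set.Ioo q.1 q.2 := by
          intro hmem
          rcases Set.mem_iUnion₂.1 hmem with ⟨q, hq, hm⟩
          exact hnx (Set.mem_biUnion (Finset.mem_insert_of_mem hq) hm)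
        rw [Set.mem_Ioo] at hnq₀
        push_neg at hnq₀
        rcases le_or_gt x q₀.1 with hle | hlt
        · have hxc1 : x ≤ c1 := le_min hx.2.le hle
          rcases eq_or_lt_of_le hxc1 with heq | hlt'
          · exact Or.inr (by simp [heq])
          · exact Or.inl (Or.inl ⟨⟨hx.1, hlt'⟩, hnt⟩)
        · have hge : q₀.2 ≤ x := hnq₀ hlt
          have hxc2 : c2 ≤ x := max_le hx.1.le hge
          rcases eq_or_lt_of_le hxc2 with heq | hlt'
          · exact Or.inr (by simp [heq.symm])
          · exact Or.inl (Or.inr ⟨⟨hlt', hx.2⟩, hnt⟩)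
      have hone : ¬ (Set.Ioo a0 c1 \ ⋃ q ∈ t, Set.Ioo q.1 q.2).Finite ∨
          ¬ (Set.Ioo c2 b0 \ ⋃ q ∈ t, Set.Ioo q.1 q.2).Finite := by
        by_contra hcon
        push_neg at hcon
        exact h (Set.Finite.subset (((hcon.1.union hcon.2).union
          (Set.toFinite {c1, c2}))) hsplit)
      rcases hone with h1 | h1
      · obtain ⟨a, b, hab, hss⟩ := ih a0 c1 h1
        refine ⟨a, b, hab, fun x hx => ?_⟩
        obtain ⟨⟨hx1, hx2⟩, hnt⟩ := hss hx
        refine ⟨⟨hx1, lt_of_lt_of_le hx2 (min_le_left _ _)⟩, ?_⟩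
        intro hmem
        rcases Set.mem_iUnion₂.1 hmem with ⟨q, hq, hm⟩
        rcases Finset.mem_insert.1 hq with hq' | hq'
        · subst hq'
          exact absurd hm.1 (not_lt.2 (le_of_lt (lt_of_lt_of_le hx2 (min_le_right _ _))))
        · exact hnt (Set.mem_biUnion hq' hm)
      · obtain ⟨a, b, hab, hss⟩ := ih c2 b0 h1
        refine ⟨a, b, hab, fun x hx => ?_⟩
        obtain ⟨⟨hx1, hx2⟩, hnt⟩ := hss hx
        refine ⟨⟨lt_of_le_of_lt (le_max_left _ _) hx1, hx2⟩, ?_⟩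
        intro hmem
        rcases Set.mem_iUnion₂.1 hmem with ⟨q, hq, hm⟩
        rcases Finset.mem_insert.1 hq with hq' | hq'
        · subst hq'
          exact absurd hm.2 (not_lt.2 (le_of_lt (lt_of_le_of_lt (le_max_right _ _) hx1)))
        · exact hnt (Set.mem_biUnion hq' hm)


open Finset in
/-- Let `S` be an optimal normal schedule and, for a shared
processor `i`, let `X_i` be the set of jobs assigned to `i` with positive
shared completion time.  If `X_i` is nonempty, then there is no idle time on
processor `i` in `(0, max{f_j(S) : j ∈ X_i})`: every point of that interval,
except possibly finitely many, lies in some shared interval of a job of `X_i`. -/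
theorem no_idle_time_of_optimal_normal
    {J : Type} [Fintype J] [DecidableEq J] {m : ℕ} (hm : 1 ≤ m)
    (p w : J → ℝ) (hp : ∀ j, 0 < p j) (hw : ∀ j, 0 < w j)
    (S : Schedule J m p) (hopt : S.Optimal w) (hnormal : S.Normal)
    (i : Fin m)
    (X : Finset J) (hX : X = Finset.univ.filter (fun j => S.mu j = i ∧ 0 < S.ftime j))
    (hne : X.Nonempty) :
    Set.Finite
      (Set.Ioo (0 : ℝ) (X.sup' hne S.ftime) \ ⋃ j ∈ X, ⋃ q ∈ S.iv j, Set.Ioo q.1 q.2) := by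
  set F := X.sup' hne S.ftime with hFdef
  by_contra hfin
  have hU : (⋃ q ∈ X.biUnion S.iv, Set.Ioo q.1 q.2)
      = ⋃ j ∈ X, ⋃ q ∈ S.iv j, Set.Ioo q.1 q.2 :=
    Finset.set_biUnion_biUnion X S.iv _
  obtain ⟨a, b, hab, hss⟩ := gap_lemma (X.biUnion S.iv) 0 F (by rw [hU]; exact hfin)
  -- basic position facts
  have hsubIoo : ∀ x, x ∈ Set.Ioo a b → 0 < x ∧ x < F := fun x hx => (hss hx).1
  have hdisj : ∀ j ∈ X, ∀ q ∈ S.iv j, ∀ x ∈ Set.Ioo a b, x ∉ Set.Ioo q.1 q.2 :=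
    fun j hj q hq x hx hmem =>
      (hss hx).2 (Set.mem_biUnion (Finset.mem_biUnion.2 ⟨j, hj, hq⟩) hmem)
  have ha : 0 ≤ a := by
    by_contra hcon
    push_neg at hcon
    have h1 : min (a/2) ((a+b)/2) ∈ Set.Ioo a b := by
      constructor
      · exact lt_min (by linarith) (by linarith)
      · exact lt_of_le_of_lt (min_le_right _ _) (by linarith)
    have := (hsubIoo _ h1).1
    have h2 : min (a/2) ((a+b)/2) ≤ a/2 := min_le_left _ _
    linarith
  have hbF : b ≤ F := by
    by_contra hcon
    push_neg at hcon
    have h1 : max ((a+b)/2) ((F+b)/2) ∈ Set.Ioo a b := by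
      constructor
      · exact lt_of_lt_of_le (by linarith) (le_max_left _ _)
      · exact max_lt (by linarith) (by linarith)
    have h2 := (hsubIoo _ h1).2
    have h3 : (F+b)/2 ≤ max ((a+b)/2) ((F+b)/2) := le_max_right _ _
    linarith
  set δ := (b - a) / 2 with hδdef
  set ε := (b - a) / 4 with hεdef
  have hδpos : 0 < δ := by rw [hδdef]; linarith
  have hεpos : 0 < ε := by rw [hεdef]; linarith
  have h2ε : 2 * ε = δ := by rw [hεdef, hδdef]; ring
  have haδ : a + δ ≤ b := by rw [hδdef]; linarith
  obtain ⟨j0, hj0X, hj0F⟩ := Finset.exists_mem_eq_sup' hne S.ftime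
  rw [← hFdef] at hj0F
  have hmuX : ∀ j ∈ X, S.mu j = i ∧ 0 < S.ftime j := by
    intro j hj
    rw [hX] at hj
    simpa using hj
  have hmuj0 : S.mu j0 = i := (hmuX j0 hj0X).1
  have hfleF : ∀ j ∈ X, S.ftime j ≤ F := fun j hj => Finset.le_sup' S.ftime hj
  have hcF : F ≤ S.c j0 := by rw [hj0F]; exact hnormal j0
  -- dichotomy for intervals of jobs on processor i
  have hdich : ∀ j, S.mu j = i → ∀ q ∈ S.iv j, q.1 < q.2 →
      (q.2 ≤ a ∨ b ≤ q.1) ∧ q.2 ≤ F := by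
    intro j hmuj q hq hlt
    by_cases hjX : j ∈ X
    · refine ⟨?_, le_trans (S.snd_le_ftime j hq) (hfleF j hjX)⟩
      by_contra hcon
      push_neg at hcon
      obtain ⟨h1, h2⟩ := hcon
      have hx1 : max q.1 a < min q.2 b := lt_min (max_lt hlt h1) (max_lt h2 hab)
      set x := (max q.1 a + min q.2 b) / 2 with hxdef
      have hax : max q.1 a < x := by rw [hxdef]; linarith
      have hxb : x < min q.2 b := by rw [hxdef]; linarith
      exact hdisj j hjX q hq x
        ⟨lt_of_le_of_lt (le_max_right _ _) hax, lt_of_lt_of_le hxb (min_le_right _ _)⟩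
        ⟨lt_of_le_of_lt (le_max_left _ _) hax, lt_of_lt_of_le hxb (min_le_left _ _)⟩
    · exfalso
      have hnot : ¬ (S.mu j = i ∧ 0 < S.ftime j) := by
        rw [hX] at hjX
        simpa using hjX
      have hft : S.ftime j ≤ 0 := by
        by_contra hpos
        push_neg at hpos
        exact hnot ⟨hmuj, hpos⟩
      have h1 := S.snd_le_ftime j hq
      have h2 := (S.iv_valid j q hq).1
      linarith
  -- the shifting map and new interval
  set k : ℝ × ℝ → ℝ × ℝ := fun q => if b ≤ q.1 then (q.1 - δ, q.2 - δ) else q with hkdef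
  set nq : ℝ × ℝ := (F - δ, F - δ + ε) with hnqdef
  have hklen : ∀ q : ℝ × ℝ, (k q).2 - (k q).1 = q.2 - q.1 := by
    intro q
    rw [hkdef]
    dsimp only
    split_ifs <;> (try dsimp only) <;> ring
  have hkle : ∀ q : ℝ × ℝ, (k q).2 ≤ q.2 := by
    intro q
    rw [hkdef]
    dsimp only
    split_ifs <;> (try dsimp only) <;> linarith
  have hkfst : ∀ q : ℝ × ℝ, 0 ≤ q.1 → 0 ≤ (k q).1 := by
    intro q h
    rw [hkdef]
    dsimp only
    split_ifs with hb
    · dsimp only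
      linarith
    · exact h
  have hkord : ∀ q : ℝ × ℝ, q.1 ≤ q.2 → (k q).1 ≤ (k q).2 := by
    intro q h
    rw [hkdef]
    dsimp only
    split_ifs <;> (try dsimp only) <;> linarith
  have hkrF : ∀ q : ℝ × ℝ, (q.2 ≤ a ∨ b ≤ q.1) → q.2 ≤ F → (k q).2 ≤ F - δ := by
    intro q h1 h2
    rw [hkdef]
    dsimp only
    split_ifs with hb
    · dsimp only
      linarith
    · have := h1.resolve_right hb
      linarith
  have hk2 : ∀ q q' : ℝ × ℝ, (q.2 ≤ a ∨ b ≤ q.1) → (q'.2 ≤ a ∨ b ≤ q'.1) →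
      (q.2 ≤ q'.1 ∨ q'.2 ≤ q.1) → ((k q).2 ≤ (k q').1 ∨ (k q').2 ≤ (k q).1) := by
    intro q q' h1 h2 h3
    rw [hkdef]
    dsimp only
    split_ifs with hb1 hb2 hb2 <;> (try dsimp only)
    · rcases h3 with h3 | h3
      · exact Or.inl (by linarith)
      · exact Or.inr (by linarith)
    · have := h2.resolve_right hb2
      exact Or.inr (by linarith)
    · have := h1.resolve_right hb1
      exact Or.inl (by linarith)
    · exact h3
  have hkinj : ∀ q q' : ℝ × ℝ, (q.2 ≤ a ∨ b ≤ q.1) → (q'.2 ≤ a ∨ b ≤ q'.1) →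
      q.1 < q.2 → q'.1 < q'.2 → k q = k q' → q = q' := by
    intro q q' h1 h2 hv hv' he
    rw [hkdef] at he
    dsimp only at he
    split_ifs at he with hb1 hb2 hb2
    · have e1 : q.1 - δ = q'.1 - δ := congrArg Prod.fst he
      have e2 : q.2 - δ = q'.2 - δ := congrArg Prod.snd he
      exact Prod.ext (by linarith) (by linarith)
    · exfalso
      have e2 : q.2 - δ = q'.2 := congrArg Prod.snd he
      have h2' : q'.2 ≤ a := h2.resolve_right hb2
      linarith
    · exfalso
      have e2 : q.2 = q'.2 - δ := congrArg Prod.snd he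
      have h1' : q.2 ≤ a := h1.resolve_right hb1
      linarith
    · exact he
  -- the new interval system
  set g : J → Finset (ℝ × ℝ) :=
    fun j => ((S.iv j).filter fun q => q.1 < q.2).image k with hgdef
  set iv' : J → Finset (ℝ × ℝ) := fun j =>
    if j = j0 then insert nq (g j) else if S.mu j = i then g j else S.iv j with hiv'def
  set c' : J → ℝ := fun j => if j = j0 then S.c j - ε else S.c j with hc'def
  have hg_mem : ∀ j, ∀ q' ∈ g j, ∃ q, q ∈ S.iv j ∧ q.1 < q.2 ∧ q' = k q := by
    intro j q' h'
    rw [hgdef] at h'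
    simp only [Finset.mem_image, Finset.mem_filter] at h'
    obtain ⟨q, ⟨hq, hlt⟩, he⟩ := h'
    exact ⟨q, hq, hlt, he.symm⟩
  have hg_snd : ∀ j, S.mu j = i → ∀ q' ∈ g j, q'.2 ≤ F - δ := by
    intro j hmuj q' h'
    obtain ⟨q, hq, hlt, he⟩ := hg_mem j q' h'
    obtain ⟨hd, hF⟩ := hdich j hmuj q hq hlt
    rw [he]
    exact hkrF q hd hF
  have hnq_not_mem : ∀ j, S.mu j = i → nq ∉ g j := by
    intro j hmuj hmem
    have := hg_snd j hmuj nq hmem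
    rw [hnqdef] at this
    dsimp only at this
    linarith
  have hgsum : ∀ j, S.mu j = i →
      ∑ q ∈ g j, (q.2 - q.1) = ∑ q ∈ S.iv j, (q.2 - q.1) := by
    intro j hmuj
    rw [hgdef]
    rw [Finset.sum_image]
    · have h1 : ∑ q ∈ (S.iv j).filter (fun q => q.1 < q.2), ((k q).2 - (k q).1)
          = ∑ q ∈ (S.iv j).filter (fun q => q.1 < q.2), (q.2 - q.1) :=
        Finset.sum_congr rfl fun q _ => hklen q
      rw [h1, ← Finset.sum_filter_add_sum_filter_not (S.iv j) (fun q => q.1 < q.2)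
        (fun q => q.2 - q.1)]
      have h2 : ∑ q ∈ (S.iv j).filter (fun q => ¬ q.1 < q.2), (q.2 - q.1) = 0 := by
        refine Finset.sum_eq_zero fun q hq => ?_
        rw [Finset.mem_filter] at hq
        have hv := (S.iv_valid j q hq.1).2
        have h3 : q.2 ≤ q.1 := not_lt.1 hq.2
        linarith
      linarith [h2]
    · intro q hq q' hq'
      rw [Finset.mem_coe, Finset.mem_filter] at hq hq'
      exact fun he => hkinj q q' (hdich j hmuj q hq.1 hq.2).1 (hdich j hmuj q' hq'.1 hq'.2).1
        hq.2 hq'.2 he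

  -- branch descriptions of the new schedule data
  have hiv'_j0 : iv' j0 = insert nq (g j0) := by
    rw [hiv'def]
    dsimp only
    rw [if_pos rfl]
  have hiv'_g : ∀ j, j ≠ j0 → S.mu j = i → iv' j = g j := by
    intro j h1 h2
    rw [hiv'def]
    dsimp only
    rw [if_neg h1, if_pos h2]
  have hiv'_ni : ∀ j, S.mu j ≠ i → iv' j = S.iv j := by
    intro j hmuj
    have hj : j ≠ j0 := fun h => hmuj (h ▸ hmuj0)
    rw [hiv'def]
    dsimp only
    rw [if_neg hj, if_neg hmuj]
  have hc'_j0 : c' j0 = S.c j0 - ε := by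
    rw [hc'def]
    dsimp only
    rw [if_pos rfl]
  have hc'_ne : ∀ j, j ≠ j0 → c' j = S.c j := by
    intro j hj
    rw [hc'def]
    dsimp only
    rw [if_neg hj]
  have hiv'_i : ∀ j, S.mu j = i → ∀ q' ∈ iv' j,
      (q' = nq ∧ j = j0) ∨ ∃ q, q ∈ S.iv j ∧ q.1 < q.2 ∧ q' = k q := by
    intro j hmuj q' h'
    by_cases hj : j = j0
    · subst hj
      rw [hiv'_j0] at h'
      rcases Finset.mem_insert.1 h' with he | hg
      · exact Or.inl ⟨he, rfl⟩
      · exact Or.inr (hg_mem _ q' hg)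
    · rw [hiv'_g j hj hmuj] at h'
      exact Or.inr (hg_mem j q' h')
  -- the five schedule axioms for the modified data
  have pf1 : ∀ j, 0 ≤ c' j := by
    intro j
    by_cases hj : j = j0
    · rw [hj, hc'_j0]
      linarith
    · rw [hc'_ne j hj]
      exact S.c_nonneg j
  have pf2 : ∀ j, ∀ q' ∈ iv' j, 0 ≤ q'.1 ∧ q'.1 ≤ q'.2 := by
    intro j q' h'
    by_cases hmuj : S.mu j = i
    · rcases hiv'_i j hmuj q' h' with ⟨he, _⟩ | ⟨q, hq, hlt, he⟩
      · rw [he, hnqdef]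
        constructor
        · show (0:ℝ) ≤ F - δ
          linarith
        · show F - δ ≤ F - δ + ε
          linarith
      · rw [he]
        have hv := S.iv_valid j q hq
        exact ⟨hkfst q hv.1, hkord q hv.2⟩
    · rw [hiv'_ni j hmuj] at h'
      exact S.iv_valid j q' h'
  have hdisj2 : ∀ j j' q' q'', S.mu j = i → S.mu j' = i →
      q' ∈ iv' j → q'' ∈ iv' j' →
      ((j = j' ∧ q' ≠ q'') ∨ j ≠ j') → q'.2 ≤ q''.1 ∨ q''.2 ≤ q'.1 := by
    intro j j' q' q'' hmuj hmuj' h1 h2 hcase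
    rcases hiv'_i j hmuj q' h1 with ⟨he1, hj1⟩ | ⟨q, hq, hlt, he1⟩ <;>
      rcases hiv'_i j' hmuj' q'' h2 with ⟨he2, hj2⟩ | ⟨q2, hq2, hlt2, he2⟩
    · exfalso
      rcases hcase with ⟨_, hne'⟩ | hne'
      · exact hne' (he1.trans he2.symm)
      · exact hne' (hj1.trans hj2.symm)
    · right
      rw [he1, he2, hnqdef]
      show (k q2).2 ≤ F - δ
      obtain ⟨hd, hF⟩ := hdich j' hmuj' q2 hq2 hlt2
      exact hkrF q2 hd hF
    · left
      rw [he1, he2, hnqdef]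
      show (k q).2 ≤ F - δ
      obtain ⟨hd, hF⟩ := hdich j hmuj q hq hlt
      exact hkrF q hd hF
    · rw [he1, he2]
      have hd1 := (hdich j hmuj q hq hlt).1
      have hd2 := (hdich j' hmuj' q2 hq2 hlt2).1
      apply hk2 q q2 hd1 hd2
      rcases hcase with ⟨hjj, hne'⟩ | hne'
      · subst hjj
        have hqne : q ≠ q2 := fun hEq => hne' (by rw [he1, he2, hEq])
        exact S.iv_disjoint j q hq q2 hq2 hqne
      · exact S.shared_disjoint j j' hne' (hmuj.trans hmuj'.symm) q hq q2 hq2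
  have pf3 : ∀ j, ∀ q ∈ iv' j, ∀ q' ∈ iv' j, q ≠ q' → q.2 ≤ q'.1 ∨ q'.2 ≤ q.1 := by
    intro j q hq q' hq' hne'
    by_cases hmuj : S.mu j = i
    · exact hdisj2 j j q q' hmuj hmuj hq hq' (Or.inl ⟨rfl, hne'⟩)
    · rw [hiv'_ni j hmuj] at hq hq'
      exact S.iv_disjoint j q hq q' hq' hne'
  have pf5 : ∀ j j', j ≠ j' → S.mu j = S.mu j' →
      ∀ q ∈ iv' j, ∀ q' ∈ iv' j', q.2 ≤ q'.1 ∨ q'.2 ≤ q.1 := by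
    intro j j' hjj hmueq q hq q' hq'
    by_cases hmuj : S.mu j = i
    · exact hdisj2 j j' q q' hmuj (hmueq ▸ hmuj) hq hq' (Or.inr hjj)
    · rw [hiv'_ni j hmuj] at hq
      rw [hiv'_ni j' (fun h => hmuj (hmueq.trans h))] at hq'
      exact S.shared_disjoint j j' hjj hmueq q hq q' hq'
  have hnqlen : nq.2 - nq.1 = ε := by
    rw [hnqdef]
    show F - δ + ε - (F - δ) = ε
    ring
  have pf4 : ∀ j, c' j + ∑ q ∈ iv' j, (q.2 - q.1) = p j := by
    intro j
    by_cases hj : j = j0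
    · rw [hj, hc'_j0, hiv'_j0, Finset.sum_insert (hnq_not_mem j0 hmuj0), hnqlen,
        hgsum j0 hmuj0]
      have := S.total j0
      linarith
    · rw [hc'_ne j hj]
      by_cases hmuj : S.mu j = i
      · rw [hiv'_g j hj hmuj, hgsum j hmuj]
        exact S.total j
      · rw [hiv'_ni j hmuj]
        exact S.total j
  -- assemble the improved schedule
  set S' : Schedule J m p := ⟨S.mu, iv', c', pf1, pf2, pf3, pf4, pf5⟩ with hS'def
  have hS'iv : S'.iv = iv' := rfl
  have hS'c : S'.c = c' := rfl
  have hbound : ∀ j, ∀ q ∈ S'.iv j, q.2 ≤ S'.c j := by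
    intro j q hq
    rw [hS'iv] at hq
    rw [hS'c]
    by_cases hmuj : S.mu j = i
    · rcases hiv'_i j hmuj q hq with ⟨he, hj⟩ | ⟨q0, hq0, hlt, he⟩
      · rw [he, hj, hc'_j0, hnqdef]
        show F - δ + ε ≤ S.c j0 - ε
        linarith
      · obtain ⟨hd, hF⟩ := hdich j hmuj q0 hq0 hlt
        have hk := hkrF q0 hd hF
        by_cases hj : j = j0
        · rw [he, hj, hc'_j0]
          linarith
        · rw [he, hc'_ne j hj]
          have h1 := hkle q0
          have h2 := S.snd_le_ftime j hq0
          have h3 := hnormal j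
          linarith
    · rw [hiv'_ni j hmuj] at hq
      rw [hc'_ne j (fun h => hmuj (h ▸ hmuj0))]
      exact le_trans (S.snd_le_ftime j hq) (hnormal j)
  have hovS : ∀ j, S.overlap j = ∑ q ∈ S.iv j, (q.2 - q.1) := fun j =>
    S.overlap_eq_sum j fun q hq => le_trans (S.snd_le_ftime j hq) (hnormal j)
  have hov_ne : ∀ j, j ≠ j0 → S'.overlap j = S.overlap j := by
    intro j hj
    rw [S'.overlap_eq_sum j (hbound j), hovS j, hS'iv]
    by_cases hmuj : S.mu j = i
    · rw [hiv'_g j hj hmuj, hgsum j hmuj]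
    · rw [hiv'_ni j hmuj]
  have hov_j0 : S'.overlap j0 = S.overlap j0 + ε := by
    rw [S'.overlap_eq_sum j0 (hbound j0), hovS j0, hS'iv, hiv'_j0,
      Finset.sum_insert (hnq_not_mem j0 hmuj0), hgsum j0 hmuj0, hnqlen]
    ring
  have homega : S'.Omega w = S.Omega w + w j0 * ε := by
    unfold Schedule.Omega
    have hterm : ∀ j ∈ Finset.univ, w j * S'.overlap j
        = w j * S.overlap j + (if j = j0 then w j0 * ε else 0) := by
      intro j _
      by_cases hj : j = j0
      · subst hj
        rw [hov_j0, if_pos rfl]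
        ring
      · rw [hov_ne j hj, if_neg hj]
        ring
    rw [Finset.sum_congr rfl hterm, Finset.sum_add_distrib,
      Finset.sum_ite_eq' Finset.univ j0 (fun _ => w j0 * ε), if_pos (Finset.mem_univ _)]
  have hle := hopt S'
  rw [homega] at hle
  have hpos : 0 < w j0 * ε := mul_pos (hw j0) hεpos
  linarith
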